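/- arXiv:1504.01976 — 3 statements merged into one kernel-verified Lean document; each statement's English description precedes it below -/
import Mathlib

section
/- For every prime p > 3, the product of (p + 2k) for k = 1 to p-1 is congruent to (-1)^((p-1)/2) times the product of (2k-1)^2 for k = 1 to (p-1)/2, modulo p^3. -/
open Finset

/-- Expansion of a product of shifted terms to first order. -/
lemma my_prod_add_const_modEq (s : Finset ℕ) (a : ℕ → ℤ) (c : ℤ) :
    ∏ i ∈ s, (a i + c) ≡
      (∏ i ∈ s, a i) + c * ∑ j ∈ s, ∏ i ∈ s.erase j, a i [ZMOD c ^ 2] := by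
  induction s using Finset.induction_on with
  | empty => simp
  | @insert x s hx ih =>
    rw [Finset.prod_insert hx, Finset.sum_insert hx, Finset.erase_insert hx,
      Finset.prod_insert hx]
    have hsum : ∑ j ∈ s, ∏ i ∈ (insert x s).erase j, a i
        = a x * ∑ j ∈ s, ∏ i ∈ s.erase j, a i := by
      rw [Finset.mul_sum]
      refine Finset.sum_congr rfl fun j hj => ?_
      rw [Finset.erase_insert_of_ne (by rintro rfl; exact hx hj),
        Finset.prod_insert (fun h => hx (Finset.mem_of_mem_erase h))]
    rw [hsum]
    calc (a x + c) * ∏ i ∈ s, (a i + c)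
        ≡ (a x + c) * ((∏ i ∈ s, a i) + c * ∑ j ∈ s, ∏ i ∈ s.erase j, a i)
          [ZMOD c ^ 2] := ih.mul_left _
      _ ≡ a x * ∏ i ∈ s, a i +
            c * ((∏ i ∈ s, a i) + a x * ∑ j ∈ s, ∏ i ∈ s.erase j, a i)
          [ZMOD c ^ 2] :=
        Int.ModEq.symm (Int.modEq_iff_dvd.mpr ⟨∑ j ∈ s, ∏ i ∈ s.erase j, a i, by ring⟩)

lemma my_sum_univ_eq_sum_range {M : Type*} [AddCommMonoid M] (p : ℕ) [NeZero p]
    (f : ZMod p → M) : ∑ x : ZMod p, f x = ∑ k ∈ range p, f (k : ZMod p) := by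
  refine Finset.sum_nbij' (fun x => x.val) (fun k => (k : ZMod p))
    (fun x _ => Finset.mem_range.mpr (ZMod.val_lt x))
    (fun k _ => Finset.mem_univ _)
    (fun x _ => ZMod.natCast_rightInverse x)
    (fun k hk => ZMod.val_cast_of_lt (Finset.mem_range.mp hk))
    (fun x _ => by rw [ZMod.natCast_rightInverse x])

lemma my_interleave {M : Type*} [AddCommMonoid M] (f : ℕ → M) (n : ℕ) :
    ∑ k ∈ range (2 * n), f k
      = ∑ j ∈ range n, f (2 * j) + ∑ j ∈ range n, f (2 * j + 1) := by
  induction n with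
  | zero => simp
  | succ n ih =>
    rw [Nat.mul_succ, Finset.sum_range_succ, Finset.sum_range_succ,
      Finset.sum_range_succ, Finset.sum_range_succ, ih]
    abel

lemma my_sum_inv_sq (p : ℕ) (hp : p.Prime) (h3 : 3 < p) :
    ∑ j ∈ range ((p - 1) / 2), (((2 * j + 1 : ℕ) : ZMod p)⁻¹) ^ 2 = 0 := by
  haveI := Fact.mk hp
  set m := (p - 1) / 2 with hm
  have h2 : p % 2 = 1 := Nat.odd_iff.mp (hp.odd_of_ne_two (by omega))
  have hodd : p = 2 * m + 1 := by omega
  set g : ℕ → ZMod p := fun k => (((k : ℕ) : ZMod p)⁻¹) ^ 2 with hg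
  have hT2 : ∑ j ∈ range m, g (2 * j + 2) = ∑ j ∈ range m, g (2 * j + 1) := by
    rw [← Finset.sum_range_reflect (fun j => g (2 * j + 1)) m]
    refine Finset.sum_congr rfl fun j hj => ?_
    have hj' : j < m := Finset.mem_range.mp hj
    have hcast : ((2 * j + 2 : ℕ) : ZMod p) = -((2 * (m - 1 - j) + 1 : ℕ) : ZMod p) := by
      have hsum : (2 * j + 2) + (2 * (m - 1 - j) + 1) = p := by omega
      have : (((2 * j + 2) + (2 * (m - 1 - j) + 1) : ℕ) : ZMod p) = 0 := by
        rw [hsum]; exact ZMod.natCast_self p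
      push_cast at this ⊢
      linear_combination this
    simp only [g, hcast, inv_neg, neg_sq]
  have hall : ∑ x : ZMod p, (x⁻¹) ^ 2 = 2 * ∑ j ∈ range m, g (2 * j + 1) := by
    rw [my_sum_univ_eq_sum_range p (fun x => (x⁻¹) ^ 2)]
    have : ∑ k ∈ range p, g k = ∑ k ∈ range (2 * m + 1), g k := by rw [← hodd]
    rw [this, Finset.sum_range_succ', my_interleave (fun k => g (k + 1)) m]
    have h0 : g 0 = 0 := by simp [g]
    simp only [h0, add_zero]
    have : ∀ j, 2 * j + 1 + 1 = 2 * j + 2 := fun j => rfl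
    rw [show (∑ j ∈ range m, g (2 * j + 1 + 1)) = ∑ j ∈ range m, g (2 * j + 2) from rfl,
      hT2]
    ring
  have hinv : ∑ x : ZMod p, (x⁻¹) ^ 2 = ∑ x : ZMod p, x ^ 2 :=
    Equiv.sum_comp (Equiv.inv (ZMod p)) (fun x => x ^ 2)
  have hzero : ∑ x : ZMod p, x ^ 2 = 0 := by
    refine FiniteField.sum_pow_lt_card_sub_one (ZMod p) 2 ?_
    rw [ZMod.card]; omega
  have h2ne : (2 : ZMod p) ≠ 0 := by
    have : ((2 : ℕ) : ZMod p) ≠ 0 := by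
      rw [Ne, ZMod.natCast_eq_zero_iff]
      exact fun h => absurd (Nat.le_of_dvd (by norm_num) h) (by omega)
    exact_mod_cast this
  have := hall.symm.trans (hinv.trans hzero)
  exact (mul_eq_zero.mp this).resolve_left h2ne

lemma my_S_dvd (p : ℕ) (hp : p.Prime) (h3 : 3 < p) :
    (p : ℤ) ∣ ∑ j ∈ range ((p - 1) / 2),
      ∏ i ∈ (range ((p - 1) / 2)).erase j, (-(2 * (i : ℤ) + 1) ^ 2) := by
  haveI := Fact.mk hp
  set m := (p - 1) / 2 with hm
  have h2 : p % 2 = 1 := Nat.odd_iff.mp (hp.odd_of_ne_two (by omega))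
  rw [← ZMod.intCast_zmod_eq_zero_iff_dvd]
  push_cast
  set B : ℕ → ZMod p := fun i => -(2 * (i : ZMod p) + 1) ^ 2 with hBdef
  have hBcast : ∀ i, B i = -(((2 * i + 1 : ℕ) : ZMod p)) ^ 2 := by
    intro i; simp [B]
  have hBne : ∀ j ∈ range m, B j ≠ 0 := by
    intro j hj
    have hjm : j < m := Finset.mem_range.mp hj
    have hne : ((2 * j + 1 : ℕ) : ZMod p) ≠ 0 := by
      rw [Ne, ZMod.natCast_eq_zero_iff]
      intro h
      have := Nat.le_of_dvd (by omega) h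
      omega
    rw [hBcast]
    simpa using pow_ne_zero 2 hne
  have hterm : ∀ j ∈ range m, ∏ i ∈ (range m).erase j, B i
      = (∏ i ∈ range m, B i) * (B j)⁻¹ := by
    intro j hj
    rw [eq_mul_inv_iff_mul_eq₀ (hBne j hj)]
    exact Finset.prod_erase_mul _ _ hj
  rw [Finset.sum_congr rfl hterm, ← Finset.mul_sum]
  have hsum : ∑ j ∈ range m, (B j)⁻¹ = 0 := by
    have : ∀ j, (B j)⁻¹ = -(((2 * j + 1 : ℕ) : ZMod p)⁻¹) ^ 2 := by
      intro j; rw [hBcast]; simp [inv_neg, inv_pow]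
    simp only [this, Finset.sum_neg_distrib]
    rw [my_sum_inv_sq p hp h3]
    exact neg_zero
  rw [hsum, mul_zero]

theorem prod_p_add_two_mul_congr (p : ℕ) (hp : p.Prime) (h3 : 3 < p) :
    (∏ k ∈ Finset.Icc 1 (p - 1), ((p : ℤ) + 2 * k)) ≡
      (-1) ^ ((p - 1) / 2) * ∏ k ∈ Finset.Icc 1 ((p - 1) / 2), ((2 * (k : ℤ) - 1)) ^ 2
        [ZMOD (p : ℤ)^3] := by
  haveI := Fact.mk hp
  have h2 : p % 2 = 1 := Nat.odd_iff.mp (hp.odd_of_ne_two (by omega))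
  set m := (p - 1) / 2 with hm
  have hpm : p = 2 * m + 1 := by omega
  set a : ℕ → ℤ := fun i => -(2 * (i : ℤ) + 1) ^ 2 with ha
  set c : ℤ := 4 * (p : ℤ) ^ 2 with hc
  -- Step A : rewrite the LHS
  have hLHS : (∏ k ∈ Finset.Icc 1 (p - 1), ((p : ℤ) + 2 * k))
      = ∏ i ∈ range m, (a i + c) := by
    have hIcc : Finset.Icc 1 (p - 1) = Finset.Ico 1 p := by
      rw [← Finset.Ico_add_one_right_eq_Icc]
      congr 1
      omega
    rw [hIcc, Finset.prod_Ico_eq_prod_range]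
    have hsplit : p - 1 = m + m := by omega
    rw [hsplit, Finset.prod_range_add]
    have h1 : (∏ i ∈ range m, ((p : ℤ) + 2 * ((1 + i : ℕ) : ℤ)))
        = ∏ i ∈ range m, (2 * (p : ℤ) - (2 * (i : ℤ) + 1)) := by
      rw [← Finset.prod_range_reflect (fun i => (p : ℤ) + 2 * ((1 + i : ℕ) : ℤ)) m]
      refine Finset.prod_congr rfl fun j hj => ?_
      have hj' : j < m := Finset.mem_range.mp hj
      push_cast
      omega
    have h2' : (∏ i ∈ range m, ((p : ℤ) + 2 * ((1 + (m + i) : ℕ) : ℤ)))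
        = ∏ i ∈ range m, (2 * (p : ℤ) + (2 * (i : ℤ) + 1)) := by
      refine Finset.prod_congr rfl fun j hj => ?_
      push_cast
      omega
    push_cast at h1 h2' ⊢
    rw [h1, h2', ← Finset.prod_mul_distrib]
    refine Finset.prod_congr rfl fun j _ => ?_
    simp only [a, c]
    ring
  -- Step B : rewrite the RHS product
  have hRHS : (∏ k ∈ Finset.Icc 1 m, ((2 * (k : ℤ) - 1)) ^ 2)
      = ∏ i ∈ range m, (2 * (i : ℤ) + 1) ^ 2 := by
    have : Finset.Icc 1 m = Finset.Ico 1 (m + 1) := (Finset.Ico_add_one_right_eq_Icc 1 m).symm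
    rw [this, Finset.prod_Ico_eq_prod_range]
    simp only [Nat.add_sub_cancel]
    refine Finset.prod_congr rfl fun j _ => ?_
    push_cast
    ring
  have hprodneg : (∏ i ∈ range m, a i) = (-1) ^ m * ∏ i ∈ range m, (2 * (i : ℤ) + 1) ^ 2 := by
    simp only [a]
    have h : ∀ i ∈ range m, -(2 * (i : ℤ) + 1) ^ 2 = (-1) * (2 * (i : ℤ) + 1) ^ 2 :=
      fun i _ => by ring
    rw [Finset.prod_congr rfl h, Finset.prod_mul_distrib, Finset.prod_const,
      Finset.card_range]
  rw [hLHS, hRHS, ← hprodneg]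
  have key := my_prod_add_const_modEq (range m) a c
  have key3 : (∏ i ∈ range m, (a i + c)) ≡
      (∏ i ∈ range m, a i) + c * ∑ j ∈ range m, ∏ i ∈ (range m).erase j, a i
      [ZMOD (p : ℤ) ^ 3] :=
    key.of_dvd ⟨16 * (p : ℤ), by rw [hc]; ring⟩
  obtain ⟨t, ht⟩ := my_S_dvd p hp h3
  have key4 : (∏ i ∈ range m, a i) + c * ∑ j ∈ range m, ∏ i ∈ (range m).erase j, a i ≡
      (∏ i ∈ range m, a i) [ZMOD (p : ℤ) ^ 3] := by
    refine Int.modEq_iff_dvd.mpr ⟨-4 * t, ?_⟩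
    have hSm : ∑ j ∈ range m, ∏ i ∈ (range m).erase j, a i = (p : ℤ) * t := ht
    rw [hc, hSm]
    ring
  exact key3.trans key4
end

section
/- For every prime p > 3, the sum over n = 1 to p-1 of (1 - p/2)_{n-1}^2 / (n! * (1 - 3p/2)_{n-1}) is congruent to 0 modulo p^2 (as a rational number, i.e., its p-adic valuation is at least 2). -/
open Finset

/-- Pochhammer symbol `(a)_m` for rational `a` and integer `m`:
`(a)_m = a(a+1)⋯(a+m-1)` for `m ≥ 0`, and `(a)_{-m} = ∏_{j=1}^m 1/(a-j)`. -/
noncomputable def poch (a : ℚ) (m : ℤ) : ℚ :=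
  if 0 ≤ m then ∏ i ∈ Finset.range m.toNat, (a + i)
  else ∏ j ∈ Finset.range (-m).toNat, 1 / (a - (j + 1))

section Helpers
variable {p : ℕ} [hp : Fact p.Prime]

lemma padic_sum_norm_le {α : Type*} (s : Finset α) (f : α → ℚ_[p]) {C : ℝ} (hC : 0 ≤ C)
    (h : ∀ i ∈ s, ‖f i‖ ≤ C) : ‖∑ i ∈ s, f i‖ ≤ C := by
  classical
  induction s using Finset.induction_on with
  | empty => simpa using hC
  | @insert a s hx ih =>
    rw [Finset.sum_insert hx]
    refine le_trans (Padic.nonarchimedean _ _)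
      (max_le (h a (mem_insert_self a s)) (ih fun i hi => h i (mem_insert_of_mem hi)))

lemma padic_norm_natCast_eq_one {k : ℕ} (h : ¬ p ∣ k) : ‖(k : ℚ_[p])‖ = 1 := by
  have h1 : ‖((k : ℤ) : ℚ_[p])‖ ≤ 1 := Padic.norm_int_le_one _
  have h2 : ¬ ‖((k : ℤ) : ℚ_[p])‖ < 1 := by
    rw [Padic.norm_intCast_lt_one_iff]
    exact_mod_cast h
  push_cast at h1 h2
  linarith [lt_or_eq_of_le h1]

lemma padic_norm_natCast_eq_one' {k : ℕ} (h1 : 1 ≤ k) (h2 : k < p) : ‖(k : ℚ_[p])‖ = 1 :=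
  padic_norm_natCast_eq_one (fun hd => absurd (Nat.le_of_dvd (by omega) hd) (by omega))

lemma sum_sq_nat : ∀ n : ℕ, 6 * ∑ m ∈ range (n+1), m^2 = n * (n+1) * (2*n+1) := by
  intro n
  induction n with
  | zero => simp
  | succ n ih => rw [Finset.sum_range_succ, Nat.mul_add, ih]; ring

lemma sum_range_zmod (f : ZMod p → ZMod p) :
    ∑ m ∈ range p, f (m : ZMod p) = ∑ x : ZMod p, f x := by
  have : NeZero p := ⟨hp.out.ne_zero⟩
  refine Finset.sum_nbij' (fun m => (m : ZMod p)) (fun x => x.val) ?_ ?_ ?_ ?_ ?_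
  · intro a _; exact mem_univ _
  · intro x _; exact mem_range.2 (ZMod.val_lt x)
  · intro a ha; exact ZMod.val_cast_of_lt (mem_range.1 ha)
  · intro x _; simp [ZMod.natCast_val, ZMod.cast_id]
  · intro a _; rfl

lemma sum_zmod_sq_eq_zero (h3 : 3 < p) : ∑ x : ZMod p, x^2 = 0 := by
  have : NeZero p := ⟨hp.out.ne_zero⟩
  rw [← sum_range_zmod (fun x => x^2)]
  have : ∑ m ∈ range p, ((m : ZMod p))^2 = ((∑ m ∈ range p, m^2 : ℕ) : ZMod p) := by
    push_cast; rfl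
  rw [this, ZMod.natCast_eq_zero_iff]
  have h6 : 6 * ∑ m ∈ range p, m^2 = (p-1) * p * (2*(p-1)+1) := by
    have := sum_sq_nat (p-1)
    rw [show p - 1 + 1 = p by omega] at this
    rw [this]
  have hdvd : p ∣ 6 * ∑ m ∈ range p, m^2 := by
    rw [h6]; exact ⟨(p-1) * (2*(p-1)+1), by ring⟩
  have hp6 : ¬ p ∣ 6 := by
    intro hd
    have h6' := Nat.le_of_dvd (by norm_num) hd
    interval_cases p
    · exact absurd hp.out (by norm_num)
    · revert hd; decide
    · exact absurd hp.out (by norm_num)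
  have hcop : Nat.Coprime p 6 := (Nat.Prime.coprime_iff_not_dvd hp.out).2 hp6
  exact Nat.Coprime.dvd_of_dvd_mul_left hcop hdvd

lemma zmod_inv_sq_sum (h3 : 3 < p) :
    ∑ m ∈ range (p-1), (((m+1 : ℕ) : ZMod p)⁻¹)^2 = 0 := by
  have : NeZero p := ⟨hp.out.ne_zero⟩
  have h1 : ∑ m ∈ range (p-1), (((m+1 : ℕ) : ZMod p)⁻¹)^2
      = ∑ m ∈ range p, (((m : ℕ) : ZMod p)⁻¹)^2 := by
    have h := Finset.sum_range_succ' (fun m => (((m : ℕ) : ZMod p)⁻¹)^2) (p-1)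
    rw [show (p-1)+1 = p by omega] at h
    rw [h]; simp
  rw [h1, sum_range_zmod (fun x => (x⁻¹)^2)]
  rw [← sum_zmod_sq_eq_zero h3]
  apply Finset.sum_nbij' (fun x => x⁻¹) (fun x => x⁻¹) <;> simp

lemma padic_W1 (h3 : 3 < p) :
    ‖∑ m ∈ range (p-1), (1 : ℚ_[p])/((m+1 : ℕ) : ℚ_[p])^2‖ ≤ ((p : ℝ))⁻¹ := by
  have : NeZero p := ⟨hp.out.ne_zero⟩
  set L := (p-1).factorial with hL
  have hLn : ¬ p ∣ L := fun hd => by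
    have := (Nat.Prime.dvd_factorial hp.out).1 hd; omega
  have hdvd : ∀ m ∈ range (p-1), (m+1) ∣ L := fun m hm =>
    Nat.dvd_factorial (by omega) (by have := mem_range.1 hm; omega)
  have key : ∀ m ∈ range (p-1), (1 : ℚ_[p])/((m+1 : ℕ) : ℚ_[p])^2
      = ((L/(m+1) : ℕ) : ℚ_[p])^2 / ((L : ℕ) : ℚ_[p])^2 := by
    intro m hm
    have h1 : ((L/(m+1) : ℕ) : ℚ_[p]) * ((m+1 : ℕ) : ℚ_[p]) = ((L : ℕ) : ℚ_[p]) := by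
      rw [← Nat.cast_mul, Nat.div_mul_cancel (hdvd m hm)]
    have hm1 : ((m+1 : ℕ) : ℚ_[p]) ≠ 0 := Nat.cast_ne_zero.2 (by omega)
    have hL0 : ((L : ℕ) : ℚ_[p]) ≠ 0 := Nat.cast_ne_zero.2 (Nat.factorial_ne_zero _)
    have hb : ((L/(m+1) : ℕ) : ℚ_[p]) ≠ 0 := fun h => hL0 (by rw [← h1, h, zero_mul])
    generalize hA : ((m+1 : ℕ) : ℚ_[p]) = A at *
    generalize hB : ((L/(m+1) : ℕ) : ℚ_[p]) = B at *
    rw [← h1]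
    field_simp
  rw [Finset.sum_congr rfl key, ← Finset.sum_div]
  have hsum : ∑ m ∈ range (p-1), ((L/(m+1) : ℕ) : ℚ_[p])^2
      = ((∑ m ∈ range (p-1), (L/(m+1))^2 : ℕ) : ℚ_[p]) := by push_cast; rfl
  rw [hsum]
  have hNdvd : p ∣ ∑ m ∈ range (p-1), (L/(m+1))^2 := by
    rw [← ZMod.natCast_eq_zero_iff]
    push_cast
    have hterm : ∀ m ∈ range (p-1), ((L/(m+1) : ℕ) : ZMod p)^2
        = ((L : ℕ) : ZMod p)^2 * (((m+1 : ℕ) : ZMod p)⁻¹)^2 := by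
      intro m hm
      have hmem := mem_range.1 hm
      have hne : ((m+1 : ℕ) : ZMod p) ≠ 0 := by
        rw [Ne, ZMod.natCast_eq_zero_iff]
        exact fun hd => absurd (Nat.le_of_dvd (by omega) hd) (by omega)
      have h1 : ((L/(m+1) : ℕ) : ZMod p) * ((m+1 : ℕ) : ZMod p) = ((L : ℕ) : ZMod p) := by
        rw [← Nat.cast_mul, Nat.div_mul_cancel (hdvd m hm)]
      generalize hA : ((m+1 : ℕ) : ZMod p) = A at *
      generalize hB : ((L/(m+1) : ℕ) : ZMod p) = B at *
      rw [← h1]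
      field_simp
    calc ∑ m ∈ range (p-1), ((L/(m+1) : ℕ) : ZMod p)^2
        = ∑ m ∈ range (p-1), ((L : ℕ) : ZMod p)^2 * (((m+1 : ℕ) : ZMod p)⁻¹)^2 :=
          Finset.sum_congr rfl hterm
      _ = ((L : ℕ) : ZMod p)^2 * ∑ m ∈ range (p-1), (((m+1 : ℕ) : ZMod p)⁻¹)^2 := by
          rw [Finset.mul_sum]
      _ = 0 := by rw [zmod_inv_sq_sum h3, mul_zero]
  have hnorm : ‖((∑ m ∈ range (p-1), (L/(m+1))^2 : ℕ) : ℚ_[p])‖ ≤ (p : ℝ)⁻¹ := by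
    have hd2 : ((p:ℤ))^1 ∣ ((∑ m ∈ range (p-1), (L/(m+1))^2 : ℕ) : ℤ) := by
      rw [pow_one]; exact_mod_cast hNdvd
    have h2 := (Padic.norm_int_le_pow_iff_dvd
      ((∑ m ∈ range (p-1), (L/(m+1))^2 : ℕ) : ℤ) 1).2 hd2
    rw [show (-(1:ℕ) : ℤ) = (-1 : ℤ) from rfl, zpow_neg_one] at h2
    exact_mod_cast h2
  have hLnorm : ‖((L : ℕ) : ℚ_[p])‖ = 1 := padic_norm_natCast_eq_one hLn
  rw [norm_div, norm_pow, hLnorm, one_pow, div_one]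
  exact hnorm

lemma padic_sub_norm_le {x y : ℚ_[p]} {C : ℝ} (hx : ‖x‖ ≤ C) (hy : ‖y‖ ≤ C) :
    ‖x - y‖ ≤ C := by
  rw [sub_eq_add_neg]
  exact le_trans (Padic.nonarchimedean _ _) (by rw [norm_neg]; exact max_le hx hy)

lemma padic_A (h3 : 3 < p) :
    ‖∑ m ∈ range (p-1), (1 : ℚ_[p])/((m+1 : ℕ) : ℚ_[p])‖ ≤ ((p : ℝ))⁻¹^2 := by
  have hppos : (0:ℝ) < (p:ℝ)⁻¹ := by positivity
  have hne : ∀ m, m ∈ range (p-1) → ((m+1 : ℕ) : ℚ_[p]) ≠ 0 ∧ ((p-(m+1) : ℕ) : ℚ_[p]) ≠ 0 := by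
    intro m hm
    constructor <;> exact Nat.cast_ne_zero.2 (by have := mem_range.1 hm; omega)
  have hnorm1 : ∀ m ∈ range (p-1), ‖((m+1 : ℕ) : ℚ_[p])‖ = 1 := fun m hm =>
    padic_norm_natCast_eq_one' (by omega) (by have := mem_range.1 hm; omega)
  have hnorm2 : ∀ m ∈ range (p-1), ‖((p-(m+1) : ℕ) : ℚ_[p])‖ = 1 := fun m hm =>
    padic_norm_natCast_eq_one' (by have := mem_range.1 hm; omega) (by have := mem_range.1 hm; omega)
  set H := ∑ m ∈ range (p-1), (1 : ℚ_[p])/((m+1 : ℕ) : ℚ_[p]) with hH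
  have hrefl : ∑ m ∈ range (p-1), (1 : ℚ_[p])/((p-(m+1) : ℕ) : ℚ_[p]) = H := by
    refine Finset.sum_nbij' (fun m => p-2-m) (fun m => p-2-m) ?_ ?_ ?_ ?_ ?_
    · intro a ha; have := mem_range.1 ha; simp only [mem_range]; omega
    · intro a ha; have := mem_range.1 ha; simp only [mem_range]; omega
    · intro a ha; have := mem_range.1 ha; omega
    · intro a ha; have := mem_range.1 ha; omega
    · intro a ha
      have h1 : p - (a+1) = (p-2-a) + 1 := by have := mem_range.1 ha; omega
      rw [h1]
  have h2H : (2 : ℚ_[p]) * H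
      = (p : ℚ_[p]) * ∑ m ∈ range (p-1),
          (1 : ℚ_[p])/(((m+1 : ℕ) : ℚ_[p]) * ((p-(m+1) : ℕ) : ℚ_[p])) := by
    rw [two_mul]
    nth_rewrite 2 [← hrefl]
    rw [hH, ← Finset.sum_add_distrib, Finset.mul_sum]
    refine Finset.sum_congr rfl ?_
    intro m hm
    obtain ⟨ha, hb⟩ := hne m hm
    have hab : ((m+1 : ℕ) : ℚ_[p]) + ((p-(m+1) : ℕ) : ℚ_[p]) = (p : ℚ_[p]) := by
      rw [← Nat.cast_add]
      congr 1
      have := mem_range.1 hm; omega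
    generalize hA : ((m+1 : ℕ) : ℚ_[p]) = A at *
    generalize hB : ((p-(m+1) : ℕ) : ℚ_[p]) = B at *
    rw [← hab]
    field_simp
    ring
  have hX : ‖∑ m ∈ range (p-1),
      (1 : ℚ_[p])/(((m+1 : ℕ) : ℚ_[p]) * ((p-(m+1) : ℕ) : ℚ_[p]))‖ ≤ (p:ℝ)⁻¹ := by
    have hsplit : ∑ m ∈ range (p-1),
        (1 : ℚ_[p])/(((m+1 : ℕ) : ℚ_[p]) * ((p-(m+1) : ℕ) : ℚ_[p]))
        = (∑ m ∈ range (p-1),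
            (p : ℚ_[p])/(((m+1 : ℕ) : ℚ_[p])^2 * ((p-(m+1) : ℕ) : ℚ_[p])))
          - ∑ m ∈ range (p-1), (1 : ℚ_[p])/((m+1 : ℕ) : ℚ_[p])^2 := by
      rw [← Finset.sum_sub_distrib]
      refine Finset.sum_congr rfl ?_
      intro m hm
      obtain ⟨ha, hb⟩ := hne m hm
      have hab : ((m+1 : ℕ) : ℚ_[p]) + ((p-(m+1) : ℕ) : ℚ_[p]) = (p : ℚ_[p]) := by
        rw [← Nat.cast_add]; congr 1; have := mem_range.1 hm; omega
      generalize hA : ((m+1 : ℕ) : ℚ_[p]) = A at *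
      generalize hB : ((p-(m+1) : ℕ) : ℚ_[p]) = B at *
      rw [← hab]
      field_simp
      ring
    rw [hsplit]
    refine padic_sub_norm_le ?_ (padic_W1 h3)
    refine padic_sum_norm_le _ _ (le_of_lt hppos) ?_
    intro m hm
    rw [norm_div, norm_mul, norm_pow, hnorm1 m hm, hnorm2 m hm, Padic.norm_p]
    simp
  have h2 : ‖(2 : ℚ_[p])‖ = 1 := by
    have := padic_norm_natCast_eq_one' (p := p) (k := 2) (by omega) (by omega)
    simpa using this
  have hfinal : ‖(2 : ℚ_[p]) * H‖ ≤ (p:ℝ)⁻¹^2 := by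
    rw [h2H, norm_mul, Padic.norm_p, sq]
    exact mul_le_mul_of_nonneg_left hX (le_of_lt hppos)
  rwa [norm_mul, h2, one_mul] at hfinal

lemma sq_sum_identity {R : Type*} [CommRing R] (f : ℕ → R) (M : ℕ) :
    (∑ i ∈ range M, f i)^2
      = ∑ i ∈ range M, (f i)^2 + 2 * ∑ i ∈ range M, (∑ j ∈ range i, f j) * f i := by
  induction M with
  | zero => simp
  | succ M ih =>
    rw [Finset.sum_range_succ, Finset.sum_range_succ, Finset.sum_range_succ (f := fun i => (∑ j ∈ range i, f j) * f i)]
    ring_nf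
    ring_nf at ih
    linear_combination ih

lemma padic_B (h3 : 3 < p) :
    ‖∑ m ∈ range (p-1), (∑ k ∈ range m, (1 : ℚ_[p])/((k+1 : ℕ) : ℚ_[p]))
        * ((1 : ℚ_[p])/((m+1 : ℕ) : ℚ_[p]))‖ ≤ (p:ℝ)⁻¹ := by
  have hppos : (0:ℝ) < (p:ℝ)⁻¹ := by positivity
  have hple : (p:ℝ)⁻¹ ≤ 1 := by
    rw [inv_le_one_iff₀]; right; exact_mod_cast Nat.one_le_iff_ne_zero.2 hp.out.ne_zero
  have hid := sq_sum_identity (fun m => (1 : ℚ_[p])/((m+1 : ℕ) : ℚ_[p])) (p-1)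
  have h2 : ‖(2 : ℚ_[p])‖ = 1 := by
    have := padic_norm_natCast_eq_one' (p := p) (k := 2) (by omega) (by omega)
    simpa using this
  have key : (2 : ℚ_[p]) * ∑ m ∈ range (p-1),
      (∑ k ∈ range m, (1 : ℚ_[p])/((k+1 : ℕ) : ℚ_[p])) * ((1 : ℚ_[p])/((m+1 : ℕ) : ℚ_[p]))
      = (∑ m ∈ range (p-1), (1 : ℚ_[p])/((m+1 : ℕ) : ℚ_[p]))^2
        - ∑ m ∈ range (p-1), ((1 : ℚ_[p])/((m+1 : ℕ) : ℚ_[p]))^2 := by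
    rw [hid]; ring
  have hnorm : ‖(2 : ℚ_[p]) * ∑ m ∈ range (p-1),
      (∑ k ∈ range m, (1 : ℚ_[p])/((k+1 : ℕ) : ℚ_[p])) * ((1 : ℚ_[p])/((m+1 : ℕ) : ℚ_[p]))‖
      ≤ (p:ℝ)⁻¹ := by
    rw [key]
    refine padic_sub_norm_le ?_ ?_
    · rw [norm_pow]
      calc ‖∑ m ∈ range (p-1), (1 : ℚ_[p])/((m+1 : ℕ) : ℚ_[p])‖^2 ≤ ((p:ℝ)⁻¹^2)^2 := by
            apply pow_le_pow_left₀ (norm_nonneg _) (padic_A h3)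
        _ ≤ (p:ℝ)⁻¹ := by
            rw [← pow_mul]
            calc (p:ℝ)⁻¹^(2*2) ≤ (p:ℝ)⁻¹^1 :=
                pow_le_pow_of_le_one (le_of_lt hppos) hple (by norm_num)
              _ = (p:ℝ)⁻¹ := pow_one _
    · have := padic_W1 (p := p) h3
      refine le_trans ?_ this
      apply le_of_eq
      congr 1
      refine Finset.sum_congr rfl fun m hm => ?_
      rw [div_pow, one_pow]
  rwa [norm_mul, h2, one_mul] at hnorm

lemma padic_norm_one_add_lt (a : ℚ_[p]) (ha : ‖a‖ ≤ 1) : ‖(p : ℚ_[p]) * a‖ < 1 := by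
  rw [norm_mul, Padic.norm_p]
  have h1 : (1:ℝ) < p := by exact_mod_cast hp.out.one_lt
  calc (p:ℝ)⁻¹ * ‖a‖ ≤ (p:ℝ)⁻¹ * 1 := by
        apply mul_le_mul_of_nonneg_left ha (by positivity)
    _ < 1 := by rw [mul_one]; exact inv_lt_one_of_one_lt₀ h1

lemma padic_norm_one_add_eq (a : ℚ_[p]) (ha : ‖a‖ ≤ 1) : ‖1 + (p : ℚ_[p]) * a‖ = 1 := by
  have h := padic_norm_one_add_lt a ha
  rw [Padic.add_eq_max_of_ne (by rw [norm_one]; exact (ne_of_lt h).symm)]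
  rw [norm_one]
  exact max_eq_left (le_of_lt h)

lemma padic_prod_expand (m : ℕ) (a : ℕ → ℚ_[p]) (ha : ∀ k ∈ range m, ‖a k‖ ≤ 1) :
    ‖(∏ k ∈ range m, (1 + (p : ℚ_[p]) * a k)) - (1 + (p : ℚ_[p]) * ∑ k ∈ range m, a k)‖
      ≤ (p:ℝ)⁻¹^2 := by
  have hpinv : (0:ℝ) ≤ (p:ℝ)⁻¹^2 := by positivity
  induction m with
  | zero => simpa using hpinv
  | succ m ih =>
    have ha' : ∀ k ∈ range m, ‖a k‖ ≤ 1 := fun k hk =>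
      ha k (mem_range.2 (lt_trans (mem_range.1 hk) (Nat.lt_succ_self m)))
    have ham : ‖a m‖ ≤ 1 := ha m (mem_range.2 (Nat.lt_succ_self m))
    rw [Finset.prod_range_succ, Finset.sum_range_succ]
    have key : (∏ k ∈ range m, (1 + (p : ℚ_[p]) * a k)) * (1 + (p : ℚ_[p]) * a m)
        - (1 + (p : ℚ_[p]) * (∑ k ∈ range m, a k + a m))
        = ((∏ k ∈ range m, (1 + (p : ℚ_[p]) * a k))
            - (1 + (p : ℚ_[p]) * ∑ k ∈ range m, a k)) * (1 + (p : ℚ_[p]) * a m)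
          + (p : ℚ_[p])^2 * ((∑ k ∈ range m, a k) * a m) := by ring
    rw [key]
    refine le_trans (Padic.nonarchimedean _ _) (max_le ?_ ?_)
    · rw [norm_mul]
      calc _ ≤ (p:ℝ)⁻¹^2 * 1 := by
            apply mul_le_mul (ih ha') (le_of_eq (padic_norm_one_add_eq _ ham))
              (norm_nonneg _) hpinv
        _ = (p:ℝ)⁻¹^2 := mul_one _
    · rw [norm_mul, norm_pow, Padic.norm_p]
      have hs : ‖(∑ k ∈ range m, a k) * a m‖ ≤ 1 := by
        rw [norm_mul]
        exact mul_le_one₀ (padic_sum_norm_le _ _ zero_le_one ha') (norm_nonneg _) ham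
      calc (p:ℝ)⁻¹^2 * ‖(∑ k ∈ range m, a k) * a m‖ ≤ (p:ℝ)⁻¹^2 * 1 :=
            mul_le_mul_of_nonneg_left hs hpinv
        _ = (p:ℝ)⁻¹^2 := mul_one _

lemma padic_term (h3 : 3 < p) {m : ℕ} (hm : m < p - 1) :
    ‖(∏ i ∈ range m, ((1:ℚ_[p]) - (p : ℚ_[p])/2 + (i : ℕ)))^2 /
        (((m+1).factorial : ℚ_[p]) * ∏ i ∈ range m, ((1:ℚ_[p]) - 3*(p : ℚ_[p])/2 + (i : ℕ)))
      - (1 + (p : ℚ_[p])/2 * ∑ k ∈ range m, (1 : ℚ_[p])/((k+1 : ℕ) : ℚ_[p]))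
          * ((1 : ℚ_[p])/((m+1 : ℕ) : ℚ_[p]))‖ ≤ (p:ℝ)⁻¹^2 := by
  have hpinv : (0:ℝ) ≤ (p:ℝ)⁻¹^2 := by positivity
  have hp1 : (1:ℝ) < p := by exact_mod_cast hp.out.one_lt
  have hpinv1 : (p:ℝ)⁻¹ ≤ 1 := le_of_lt (inv_lt_one_of_one_lt₀ hp1)
  -- norms of small naturals
  have hnk : ∀ k : ℕ, k < m → ¬ p ∣ 2*(k+1) := by
    intro k hk hd
    rcases (Nat.Prime.dvd_mul hp.out).1 hd with h | h
    · have := Nat.le_of_dvd (by norm_num) h; omega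
    · have := Nat.le_of_dvd (by omega) h; omega
  set aP : ℕ → ℚ_[p] := fun i => -(1/(2*(((i:ℕ) : ℚ_[p])+1))) with haPdef
  set aQ : ℕ → ℚ_[p] := fun i => -(3/(2*(((i:ℕ) : ℚ_[p])+1))) with haQdef
  have hcast2 : ∀ i : ℕ, 2*(((i:ℕ) : ℚ_[p])+1) = ((2*(i+1) : ℕ) : ℚ_[p]) := by
    intro i; push_cast; ring
  have hden : ∀ i : ℕ, i < m → ‖2*(((i:ℕ) : ℚ_[p])+1)‖ = 1 := by
    intro i hi; rw [hcast2]; exact padic_norm_natCast_eq_one (hnk i hi)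
  have hdenne : ∀ i : ℕ, (((i:ℕ) : ℚ_[p])+1) ≠ 0 := by
    intro i
    have : (((i:ℕ) : ℚ_[p])+1) = ((i+1 : ℕ) : ℚ_[p]) := by push_cast; ring
    rw [this]
    exact Nat.cast_ne_zero.2 (by omega)
  have haP : ∀ i ∈ range m, ‖aP i‖ ≤ 1 := by
    intro i hi
    rw [haPdef]
    simp only [norm_neg, norm_div, norm_one]
    rw [hden i (mem_range.1 hi)]
    norm_num
  have haQ : ∀ i ∈ range m, ‖aQ i‖ ≤ 1 := by
    intro i hi
    rw [haQdef]
    simp only [norm_neg, norm_div]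
    rw [hden i (mem_range.1 hi), div_one]
    have : (3 : ℚ_[p]) = ((3:ℤ) : ℚ_[p]) := by norm_num
    rw [this]; exact Padic.norm_int_le_one _
  set H : ℚ_[p] := ∑ k ∈ range m, (1 : ℚ_[p])/((k+1 : ℕ) : ℚ_[p]) with hHdef
  set x : ℚ_[p] := (p : ℚ_[p])/2 * H with hxdef
  have hHle : ‖H‖ ≤ 1 := by
    refine padic_sum_norm_le _ _ zero_le_one ?_
    intro k hk
    rw [norm_div, norm_one, padic_norm_natCast_eq_one' (by omega) (by have := mem_range.1 hk; omega)]
    norm_num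
  have h2norm : ‖(2 : ℚ_[p])‖ = 1 := by
    have := padic_norm_natCast_eq_one' (p := p) (k := 2) (by omega) (by omega)
    simpa using this
  have hx : ‖x‖ ≤ (p:ℝ)⁻¹ := by
    rw [hxdef, norm_mul, norm_div, Padic.norm_p, h2norm, div_one]
    calc (p:ℝ)⁻¹ * ‖H‖ ≤ (p:ℝ)⁻¹ * 1 := mul_le_mul_of_nonneg_left hHle (by positivity)
      _ = (p:ℝ)⁻¹ := mul_one _
  have hx1 : ‖x‖ ≤ 1 := le_trans hx hpinv1
  set P : ℚ_[p] := ∏ i ∈ range m, (1 + (p : ℚ_[p]) * aP i) with hPdef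
  set Q : ℚ_[p] := ∏ i ∈ range m, (1 + (p : ℚ_[p]) * aQ i) with hQdef
  -- sums of aP, aQ
  have hsumP : ∑ i ∈ range m, aP i = (-(1/2)) * H := by
    rw [hHdef, Finset.mul_sum]
    refine Finset.sum_congr rfl fun i _ => ?_
    rw [haPdef]
    have hc : ((i+1 : ℕ) : ℚ_[p]) = ((i:ℕ) : ℚ_[p]) + 1 := by push_cast; ring
    rw [hc]
    have := hdenne i
    field_simp
  have hsumQ : ∑ i ∈ range m, aQ i = (-(3/2)) * H := by
    rw [hHdef, Finset.mul_sum]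
    refine Finset.sum_congr rfl fun i _ => ?_
    rw [haQdef]
    have hc : ((i+1 : ℕ) : ℚ_[p]) = ((i:ℕ) : ℚ_[p]) + 1 := by push_cast; ring
    rw [hc]
    have := hdenne i
    field_simp
  have hPexp : ‖P - (1 - x)‖ ≤ (p:ℝ)⁻¹^2 := by
    have h := padic_prod_expand m aP haP
    rw [hsumP] at h
    rwa [show (1 + (p : ℚ_[p]) * ((-(1/2)) * H)) = 1 - x by rw [hxdef]; ring] at h
  have hQexp : ‖Q - (1 - 3*x)‖ ≤ (p:ℝ)⁻¹^2 := by
    have h := padic_prod_expand m aQ haQ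
    rw [hsumQ] at h
    rwa [show (1 + (p : ℚ_[p]) * ((-(3/2)) * H)) = 1 - 3*x by rw [hxdef]; ring] at h
  have hPle : ‖P‖ ≤ 1 := by
    rw [hPdef, show ‖∏ i ∈ range m, (1 + (p : ℚ_[p]) * aP i)‖
        = ∏ i ∈ range m, ‖1 + (p : ℚ_[p]) * aP i‖ from norm_prod _ _]
    exact Finset.prod_le_one (fun i _ => norm_nonneg _)
      (fun i hi => le_of_eq (padic_norm_one_add_eq _ (haP i hi)))
  have hQeq : ‖Q‖ = 1 := by
    rw [hQdef, show ‖∏ i ∈ range m, (1 + (p : ℚ_[p]) * aQ i)‖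
        = ∏ i ∈ range m, ‖1 + (p : ℚ_[p]) * aQ i‖ from norm_prod _ _]
    exact Finset.prod_eq_one (fun i hi => padic_norm_one_add_eq _ (haQ i hi))
  have hQne : Q ≠ 0 := fun h => by rw [h, norm_zero] at hQeq; norm_num at hQeq
  -- key algebra
  have hkey : ‖P^2 - (1+x)*Q‖ ≤ (p:ℝ)⁻¹^2 := by
    have hid : P^2 - (1+x)*Q
        = (P - (1-x))*(P + (1-x)) - (1+x)*(Q - (1-3*x)) + 4*x^2 := by ring
    rw [hid]
    refine le_trans (Padic.nonarchimedean _ _) (max_le ?_ ?_)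
    · refine padic_sub_norm_le ?_ ?_
      · rw [norm_mul]
        calc _ ≤ (p:ℝ)⁻¹^2 * 1 := by
              apply mul_le_mul hPexp ?_ (norm_nonneg _) hpinv
              refine le_trans (Padic.nonarchimedean _ _) (max_le hPle ?_)
              exact padic_sub_norm_le (le_of_eq norm_one) hx1
          _ = _ := mul_one _
      · rw [norm_mul]
        calc _ ≤ 1 * ((p:ℝ)⁻¹^2) := by
              apply mul_le_mul ?_ hQexp (norm_nonneg _) zero_le_one
              refine le_trans (Padic.nonarchimedean _ _) (max_le (le_of_eq norm_one) hx1)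
          _ = _ := one_mul _
    · rw [norm_mul, norm_pow]
      have h4 : ‖(4 : ℚ_[p])‖ ≤ 1 := by
        have : (4 : ℚ_[p]) = ((4:ℤ) : ℚ_[p]) := by norm_num
        rw [this]; exact Padic.norm_int_le_one _
      calc ‖(4 : ℚ_[p])‖ * ‖x‖^2 ≤ 1 * ((p:ℝ)⁻¹)^2 := by
            apply mul_le_mul h4 (pow_le_pow_left₀ (norm_nonneg _) hx 2) (by positivity) zero_le_one
        _ = _ := one_mul _
  -- rewrite the term
  have hfact : ∀ n : ℕ, ((n.factorial : ℕ) : ℚ_[p]) ≠ 0 :=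
    fun n => Nat.cast_ne_zero.2 (Nat.factorial_ne_zero n)
  have hm1ne : ((m+1 : ℕ) : ℚ_[p]) ≠ 0 := Nat.cast_ne_zero.2 (by omega)
  have hm1norm : ‖((m+1 : ℕ) : ℚ_[p])‖ = 1 := padic_norm_natCast_eq_one' (by omega) (by omega)
  have hprodP : ∏ i ∈ range m, ((1:ℚ_[p]) - (p : ℚ_[p])/2 + (i : ℕ))
      = ((m.factorial : ℕ) : ℚ_[p]) * P := by
    have hterm : ∀ i ∈ range m, (1:ℚ_[p]) - (p : ℚ_[p])/2 + (i : ℕ)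
        = (((i:ℕ) : ℚ_[p])+1) * (1 + (p : ℚ_[p]) * aP i) := by
      intro i _
      rw [haPdef]
      have := hdenne i
      field_simp
      ring
    rw [Finset.prod_congr rfl hterm, Finset.prod_mul_distrib, hPdef]
    congr 1
    rw [show ((m.factorial : ℕ) : ℚ_[p]) = ((∏ i ∈ range m, (i+1) : ℕ) : ℚ_[p]) by
      rw [Finset.prod_range_add_one_eq_factorial]]
    push_cast
    ring
  have hprodQ : ∏ i ∈ range m, ((1:ℚ_[p]) - 3*(p : ℚ_[p])/2 + (i : ℕ))
      = ((m.factorial : ℕ) : ℚ_[p]) * Q := by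
    have hterm : ∀ i ∈ range m, (1:ℚ_[p]) - 3*(p : ℚ_[p])/2 + (i : ℕ)
        = (((i:ℕ) : ℚ_[p])+1) * (1 + (p : ℚ_[p]) * aQ i) := by
      intro i _
      rw [haQdef]
      have := hdenne i
      field_simp
      ring
    rw [Finset.prod_congr rfl hterm, Finset.prod_mul_distrib, hQdef]
    congr 1
    rw [show ((m.factorial : ℕ) : ℚ_[p]) = ((∏ i ∈ range m, (i+1) : ℕ) : ℚ_[p]) by
      rw [Finset.prod_range_add_one_eq_factorial]]
    push_cast
    ring
  have hfactsucc : (((m+1).factorial : ℕ) : ℚ_[p]) = ((m+1 : ℕ) : ℚ_[p]) * ((m.factorial : ℕ) : ℚ_[p]) := by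
    rw [Nat.factorial_succ]; push_cast; ring
  have hT : (∏ i ∈ range m, ((1:ℚ_[p]) - (p : ℚ_[p])/2 + (i : ℕ)))^2 /
        (((m+1).factorial : ℚ_[p]) * ∏ i ∈ range m, ((1:ℚ_[p]) - 3*(p : ℚ_[p])/2 + (i : ℕ)))
      - (1 + x) * ((1 : ℚ_[p])/((m+1 : ℕ) : ℚ_[p]))
      = (P^2 - (1+x)*Q) / (((m+1 : ℕ) : ℚ_[p]) * Q) := by
    clear_value P Q x H
    rw [hprodP, hprodQ, hfactsucc]
    have e1 : (((m.factorial : ℕ) : ℚ_[p]) * P)^2 /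
        ((((m+1 : ℕ) : ℚ_[p]) * ((m.factorial : ℕ) : ℚ_[p])) * (((m.factorial : ℕ) : ℚ_[p]) * Q))
        = P^2/(((m+1 : ℕ) : ℚ_[p])*Q) := by
      rw [mul_pow, show (((m+1 : ℕ) : ℚ_[p]) * ((m.factorial : ℕ) : ℚ_[p])) * (((m.factorial : ℕ) : ℚ_[p]) * Q)
          = ((m.factorial : ℕ) : ℚ_[p])^2 * (((m+1 : ℕ) : ℚ_[p])*Q) by ring]
      exact mul_div_mul_left _ _ (pow_ne_zero 2 (hfact m))
    rw [e1]
    push_cast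
    field_simp [hdenne m, hQne]
  rw [hT]
  rw [norm_div, norm_mul, hm1norm, hQeq, one_mul, div_one]
  exact hkey

lemma poch_eq (a : ℚ) (n : ℕ) (hn : 1 ≤ n) :
    poch a ((n:ℤ)-1) = ∏ i ∈ range (n-1), (a + i) := by
  unfold poch
  rw [if_pos (by omega : (0:ℤ) ≤ (n:ℤ)-1)]
  rw [show ((n:ℤ)-1).toNat = n-1 by omega]

lemma sum_Icc_one {M : Type*} [AddCommMonoid M] (f : ℕ → M) (n : ℕ) :
    ∑ k ∈ Icc 1 n, f k = ∑ m ∈ range n, f (m+1) := by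
  rw [← Finset.Ico_add_one_right_eq_Icc, Finset.sum_Ico_eq_sum_range]
  refine Finset.sum_congr (by norm_num) fun i _ => by rw [Nat.add_comm]

end Helpers

theorem sum_poch_ratio_padicVal (p : ℕ) (hp : p.Prime) (h3 : 3 < p) :
    (∑ n ∈ Finset.Icc 1 (p - 1),
        (poch (1 - (p : ℚ)/2) ((n : ℤ) - 1))^2 /
          ((n.factorial : ℚ) * poch (1 - 3*(p : ℚ)/2) ((n : ℤ) - 1))) = 0 ∨
      (2 : ℤ) ≤ padicValRat p (∑ n ∈ Finset.Icc 1 (p - 1),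
        (poch (1 - (p : ℚ)/2) ((n : ℤ) - 1))^2 /
          ((n.factorial : ℚ) * poch (1 - 3*(p : ℚ)/2) ((n : ℤ) - 1))) := by
  haveI : Fact p.Prime := ⟨hp⟩
  set S : ℚ := ∑ n ∈ Finset.Icc 1 (p - 1),
      (poch (1 - (p : ℚ)/2) ((n : ℤ) - 1))^2 /
        ((n.factorial : ℚ) * poch (1 - 3*(p : ℚ)/2) ((n : ℤ) - 1)) with hS
  by_cases h0 : S = 0
  · left; exact h0
  right
  have hpinv : (0:ℝ) ≤ (p:ℝ)⁻¹^2 := by positivity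
  have hp1 : (1:ℝ) < p := by exact_mod_cast hp.one_lt
  have hS2 : S = ∑ m ∈ range (p-1), ((∏ i ∈ range m, ((1:ℚ) - (p:ℚ)/2 + (i:ℕ)))^2 /
      (((m+1).factorial : ℚ) * ∏ i ∈ range m, ((1:ℚ) - 3*(p:ℚ)/2 + (i:ℕ)))) := by
    rw [hS, sum_Icc_one]
    refine Finset.sum_congr rfl fun m hm => ?_
    rw [poch_eq _ _ (by omega), poch_eq _ _ (by omega)]
    norm_num
  -- cast to Q_p
  have hcast : ((S : ℚ) : ℚ_[p]) = ∑ m ∈ range (p-1),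
      ((∏ i ∈ range m, ((1:ℚ_[p]) - (p : ℚ_[p])/2 + (i : ℕ)))^2 /
        (((m+1).factorial : ℚ_[p]) * ∏ i ∈ range m, ((1:ℚ_[p]) - 3*(p : ℚ_[p])/2 + (i : ℕ)))) := by
    rw [hS2]
    push_cast
    rfl
  set Tsum : ℚ_[p] := ∑ m ∈ range (p-1),
      (1 + (p : ℚ_[p])/2 * ∑ k ∈ range m, (1 : ℚ_[p])/((k+1 : ℕ) : ℚ_[p]))
        * ((1 : ℚ_[p])/((m+1 : ℕ) : ℚ_[p])) with hTsum
  have hdiff : ‖((S : ℚ) : ℚ_[p]) - Tsum‖ ≤ (p:ℝ)⁻¹^2 := by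
    rw [hcast, hTsum, ← Finset.sum_sub_distrib]
    refine padic_sum_norm_le _ _ hpinv fun m hm => ?_
    exact padic_term h3 (mem_range.1 hm)
  have hTnorm : ‖Tsum‖ ≤ (p:ℝ)⁻¹^2 := by
    have hsplit : Tsum = (∑ m ∈ range (p-1), (1 : ℚ_[p])/((m+1 : ℕ) : ℚ_[p]))
        + (p : ℚ_[p])/2 * ∑ m ∈ range (p-1),
            (∑ k ∈ range m, (1 : ℚ_[p])/((k+1 : ℕ) : ℚ_[p])) * ((1 : ℚ_[p])/((m+1 : ℕ) : ℚ_[p])) := by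
      rw [hTsum, Finset.mul_sum, ← Finset.sum_add_distrib]
      exact Finset.sum_congr rfl fun m _ => by ring
    rw [hsplit]
    refine le_trans (Padic.nonarchimedean _ _) (max_le (padic_A h3) ?_)
    have h2norm : ‖(2 : ℚ_[p])‖ = 1 := by
      have := padic_norm_natCast_eq_one' (p := p) (k := 2) (by omega) (by omega)
      simpa using this
    rw [norm_mul, norm_div, Padic.norm_p, h2norm, div_one, sq]
    exact mul_le_mul_of_nonneg_left (padic_B h3) (by positivity)
  have hnorm : ‖((S : ℚ) : ℚ_[p])‖ ≤ (p:ℝ)⁻¹^2 := by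
    have : ((S : ℚ) : ℚ_[p]) = (((S : ℚ) : ℚ_[p]) - Tsum) + Tsum := by ring
    rw [this]
    exact le_trans (Padic.nonarchimedean _ _) (max_le hdiff hTnorm)
  rw [Padic.eq_padicNorm, padicNorm.eq_zpow_of_nonzero h0] at hnorm
  push_cast at hnorm
  have hpow : (p:ℝ)⁻¹ ^ 2 = (p:ℝ) ^ (-2 : ℤ) := by
    rw [zpow_neg, inv_pow]
    norm_cast
  rw [hpow] at hnorm
  have := (zpow_le_zpow_iff_right₀ hp1).1 hnorm
  linarith
end

section
/- Define F(n,k) = (84n^2 - 56nk + 4k^2 + 52n - 12k + 5) * (-1)^k * (1/2)_n * (1/2)_{n+k} * (1/2)_{n-k}^2 / (2^{4n} * (1)_n^2 * (1)_{2n-k+1}) and G(n,k) = 64n^2 * (-1)^k * (1/2)_n * (1/2)_{n+k-1} * (1/2)_{n-k}^2 / (2^{4n} * (1)_n^2 * (1)_{2n-k}). Then F(n,k-1) - F(n,k) = G(n+1,k) - G(n,k) for all integers n >= 0 and k with 2n - k + 1 >= 0 (interpreting terms with negative Pochhammer index of (1) as zero). -/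
open Finset

lemma poch_succ (a : ℚ) (m : ℤ) (ha : a + m ≠ 0) :
    poch a (m + 1) = poch a m * (a + m) := by
  rcases le_or_gt 0 m with h | h
  · rw [poch, poch, if_pos h, if_pos (by omega)]
    have h1 : (m + 1).toNat = m.toNat + 1 := by omega
    rw [h1, Finset.prod_range_succ]
    have h2 : ((m.toNat : ℚ)) = (m : ℚ) := by
      exact_mod_cast congrArg (Int.cast : ℤ → ℚ) (Int.toNat_of_nonneg h)
    rw [h2]
  · rcases eq_or_lt_of_le (by omega : m + 1 ≤ 0) with h1 | h1
    · have hm : m = -1 := by omega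
      subst hm
      have e0 : poch a (-1 + 1) = 1 := by norm_num [poch]
      have e1 : poch a (-1) = 1 / (a - 1) := by simp [poch]
      rw [e0, e1]
      have ha' : a + ((-1 : ℤ) : ℚ) = a - 1 := by push_cast; ring
      rw [ha'] at ha ⊢
      rw [one_div, inv_mul_cancel₀ ha]
    · rw [poch, poch, if_neg (by omega), if_neg (by omega)]
      have ht : (-m).toNat = (-(m + 1)).toNat + 1 := by omega
      rw [ht, Finset.prod_range_succ]
      have h2 : (((-(m + 1)).toNat : ℚ)) = -(m : ℚ) - 1 := by
        have := Int.toNat_of_nonneg (by omega : (0:ℤ) ≤ -(m + 1))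
        have : (((-(m + 1)).toNat : ℤ) : ℚ) = ((-(m+1) : ℤ) : ℚ) := by rw [this]
        push_cast at this
        linarith [this]
      rw [h2]
      have h3 : a - (-(m:ℚ) - 1 + 1) = a + m := by ring
      rw [h3, mul_assoc, one_div, inv_mul_cancel₀ ha, mul_one]

lemma poch_half_ne_zero (m : ℤ) : poch (1/2) m ≠ 0 := by
  rw [poch]
  split
  · apply Finset.prod_ne_zero_iff.mpr
    intro i _
    positivity
  · apply Finset.prod_ne_zero_iff.mpr
    intro j _
    have h0 : (1/2 : ℚ) - ((j : ℚ) + 1) ≠ 0 := by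
      have hj : (0:ℚ) ≤ (j:ℚ) := Nat.cast_nonneg j
      intro h; rw [sub_eq_zero] at h; linarith
    exact one_div_ne_zero h0

lemma poch_half_succ (m : ℤ) : poch (1/2) (m + 1) = poch (1/2) m * (1/2 + m) := by
  apply poch_succ
  intro h
  have h2 : (2:ℚ) * (1/2 + (m:ℚ)) = 0 := by rw [h]; ring
  have : (1 : ℚ) + 2 * m = 0 := by linarith [h2]
  have : ((1 + 2*m : ℤ) : ℚ) = 0 := by push_cast; linarith
  have : (1 + 2*m : ℤ) = 0 := by exact_mod_cast this
  omega

lemma poch_one_succ (m : ℤ) (h : 0 ≤ m) : poch 1 (m + 1) = poch 1 m * (1 + m) := by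
  apply poch_succ
  intro hh
  have : ((1 + m : ℤ) : ℚ) = 0 := by push_cast; linarith [hh]
  have : (1 + m : ℤ) = 0 := by exact_mod_cast this
  omega

lemma poch_one_ne_zero (m : ℤ) (h : 0 ≤ m) : poch 1 m ≠ 0 := by
  rw [poch, if_pos h]
  apply Finset.prod_ne_zero_iff.mpr
  intro i _
  positivity

lemma poch_one_neg_one : poch 1 (-1) = 0 := by
  simp [poch]

lemma poch_zero (a : ℚ) : poch a 0 = 1 := by simp [poch]
lemma poch_one_one : poch 1 1 = 1 := by norm_num [poch]

/-- Guillera's WZ-pair function `F`. -/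
noncomputable def F (n k : ℤ) : ℚ :=
  ((84*n^2 - 56*n*k + 4*k^2 + 52*n - 12*k + 5 : ℤ) : ℚ) * (-1 : ℚ)^k *
    poch (1/2) n * poch (1/2) (n + k) * (poch (1/2) (n - k))^2 /
      ((2 : ℚ)^(4*n) * (poch 1 n)^2 * poch 1 (2*n - k + 1))

/-- Guillera's WZ-pair function `G`. -/
noncomputable def G (n k : ℤ) : ℚ :=
  (64 : ℚ) * (n : ℚ)^2 * (-1 : ℚ)^k *
    poch (1/2) n * poch (1/2) (n + k - 1) * (poch (1/2) (n - k))^2 /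
      ((2 : ℚ)^(4*n) * (poch 1 n)^2 * poch 1 (2*n - k))

set_option maxHeartbeats 2000000 in
theorem wz_pair_relation (n k : ℤ) (hn : 0 ≤ n) (hk : 0 ≤ 2*n - k + 1) :
    F n (k - 1) - F n k = G (n + 1) k - G n k := by
  unfold F G
  have hw : (-1:ℚ)^(k-1) = -(-1:ℚ)^k := by
    rw [zpow_sub_one₀ (by norm_num : (-1:ℚ) ≠ 0)]
    norm_num
  have ht : (2:ℚ)^(4*(n+1)) = (2:ℚ)^(4*n) * 16 := by
    rw [show 4*(n+1) = 4*n + 4 by ring, zpow_add₀ (by norm_num : (2:ℚ) ≠ 0)]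
    norm_num
  have E1 : poch (1/2) (n + (k-1)) = poch (1/2) (n+k-1) := by
    rw [show n + (k-1) = n+k-1 by ring]
  have E2 : poch (1/2) (n + k) = poch (1/2) (n+k-1) * (1/2 + ((n+k-1 : ℤ) : ℚ)) := by
    have h := poch_half_succ (n+k-1)
    rw [show n+k-1+1 = n+k by ring] at h
    exact h
  have E3 : poch (1/2) (n - (k-1)) = poch (1/2) (n-k) * (1/2 + ((n-k : ℤ) : ℚ)) := by
    rw [show n-(k-1) = (n-k)+1 by ring, poch_half_succ]
  have E4 : poch (1/2) (n+1) = poch (1/2) n * (1/2 + (n : ℚ)) := poch_half_succ n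
  have E5 : poch (1/2) (n+1+k-1) = poch (1/2) (n+k-1) * (1/2 + ((n+k-1 : ℤ) : ℚ)) := by
    rw [show n+1+k-1 = (n+k-1)+1 by ring, poch_half_succ]
  have E6 : poch (1/2) (n+1-k) = poch (1/2) (n-k) * (1/2 + ((n-k : ℤ) : ℚ)) := by
    rw [show n+1-k = (n-k)+1 by ring, poch_half_succ]
  have E7 : poch 1 (n+1) = poch 1 n * (1 + (n : ℚ)) := poch_one_succ n hn
  have hp : poch (1/2) n ≠ 0 := poch_half_ne_zero n
  have hq : poch (1/2) (n+k-1) ≠ 0 := poch_half_ne_zero _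
  have hr : poch (1/2) (n-k) ≠ 0 := poch_half_ne_zero _
  have hd : poch 1 n ≠ 0 := poch_one_ne_zero n hn
  have htn : (2:ℚ)^(4*n) ≠ 0 := zpow_ne_zero _ (by norm_num)
  have hn1 : (1 : ℚ) + (n : ℚ) ≠ 0 := by
    have : (0:ℚ) ≤ (n:ℚ) := by exact_mod_cast hn
    intro h; linarith
  rw [hw, ht, E1, E2, E3, E4, E5, E6, E7]
  rcases (by omega : 2*n - k = -1 ∨ 0 ≤ 2*n - k) with hcase | hcase
  · have hk1 : k = 2*n+1 := by omega
    subst hk1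
    rw [show (2*n - (2*n+1) + 1 : ℤ) = 0 by ring, poch_zero]
    rw [show (2*n - (2*n+1-1) + 1 : ℤ) = 1 by ring, poch_one_one]
    rw [show (2*(n+1) - (2*n+1) : ℤ) = 1 by ring, poch_one_one]
    rw [show (2*n - (2*n+1) : ℤ) = -1 by ring, poch_one_neg_one]
    rw [mul_zero, div_zero, sub_zero]
    set p := poch (1/2) n with hps
    set q := poch (1/2) (n+(2*n+1)-1) with hqs
    set r := poch (1/2) (n-(2*n+1)) with hrs
    set d := poch 1 n with hds
    set t := (2:ℚ)^(4*n) with hts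
    set w := (-1:ℚ)^(2*n+1) with hws
    push_cast
    field_simp
    ring
  · have h1 : poch 1 (2*n - k + 1) = poch 1 (2*n-k) * (1 + ((2*n-k : ℤ) : ℚ)) :=
      poch_one_succ _ hcase
    have h2 : poch 1 (2*n - (k-1) + 1)
        = poch 1 (2*n-k) * (1 + ((2*n-k : ℤ) : ℚ)) * (1 + ((2*n-k+1 : ℤ) : ℚ)) := by
      rw [show 2*n-(k-1)+1 = (2*n-k+1)+1 by ring, poch_one_succ _ (by omega),
        poch_one_succ _ hcase]
    have h3 : poch 1 (2*(n+1) - k)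
        = poch 1 (2*n-k) * (1 + ((2*n-k : ℤ) : ℚ)) * (1 + ((2*n-k+1 : ℤ) : ℚ)) := by
      rw [show 2*(n+1)-k = (2*n-k+1)+1 by ring, poch_one_succ _ (by omega),
        poch_one_succ _ hcase]
    have he : poch 1 (2*n-k) ≠ 0 := poch_one_ne_zero _ hcase
    have hm1 : (1 : ℚ) + ((2*n-k : ℤ) : ℚ) ≠ 0 := by
      have : (0:ℚ) ≤ ((2*n-k : ℤ) : ℚ) := by exact_mod_cast hcase
      intro h; linarith
    have hm2 : (1 : ℚ) + ((2*n-k+1 : ℤ) : ℚ) ≠ 0 := by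
      have : (0:ℚ) ≤ ((2*n-k+1 : ℤ) : ℚ) := by exact_mod_cast (by omega : (0:ℤ) ≤ 2*n-k+1)
      intro h; linarith
    rw [h1, h2, h3]
    set p := poch (1/2) n with hps
    set q := poch (1/2) (n+k-1) with hqs
    set r := poch (1/2) (n-k) with hrs
    set d := poch 1 n with hds
    set e := poch 1 (2*n-k) with hes
    set t := (2:ℚ)^(4*n) with hts
    set w := (-1:ℚ)^k with hws
    push_cast at hm1 hm2 ⊢
    have hm1' : (1 : ℚ) + ((n : ℚ) * 2 - k) ≠ 0 := by convert hm1 using 2; ring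
    have hm2' : (1 : ℚ) + ((n : ℚ) * 2 - k + 1) ≠ 0 := by convert hm2 using 2; ring
    field_simp
    ring
end
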